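/- arXiv:1809.06395 — 3 statements merged into one kernel-verified Lean document; each statement's English description precedes it below -/
import Mathlib

section
/- Let b₁, b₂ > 0, θ₀ ∈ ℝ and β₁, β₂ ∈ ℝ. Suppose (ε_n) and (δ_n) are real sequences with ε_n → 0, δ_n → 0, ε_n > -1 and δ_n > -1 for all n ≥ 1, and suppose that for every n ≥ 1 one has -exp(-2b₁(θ₀ + arctan β₁)) · exp(2nπb₁) · (1 + ε_n) = -exp(-2b₂(θ₀ + arctan β₂)) · exp(2nπb₂) · (1 + δ_n). Then b₁ = b₂ and β₁ = β₂. -/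
open Real Filter Topology

theorem equal_eigenvalue_asymptotics_imply_equal_parameters
    (b₁ b₂ θ₀ β₁ β₂ : ℝ) (hb₁ : 0 < b₁) (hb₂ : 0 < b₂)
    (ε δ : ℕ → ℝ)
    (hε : Tendsto ε atTop (nhds 0)) (hδ : Tendsto δ atTop (nhds 0))
    (hε' : ∀ n : ℕ, 1 ≤ n → -1 < ε n) (hδ' : ∀ n : ℕ, 1 ≤ n → -1 < δ n)
    (heq : ∀ n : ℕ, 1 ≤ n →
      -Real.exp (-2 * b₁ * (θ₀ + Real.arctan β₁)) *
        Real.exp (2 * (n : ℝ) * π * b₁) * (1 + ε n)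
      = -Real.exp (-2 * b₂ * (θ₀ + Real.arctan β₂)) *
        Real.exp (2 * (n : ℝ) * π * b₂) * (1 + δ n)) :
    b₁ = b₂ ∧ β₁ = β₂ := by
  set c₁ : ℝ := -2 * b₁ * (θ₀ + Real.arctan β₁) with hc₁
  set c₂ : ℝ := -2 * b₂ * (θ₀ + Real.arctan β₂) with hc₂
  set f : ℕ → ℝ := fun n => Real.log (1 + δ n) - Real.log (1 + ε n) with hf
  have key : ∀ n : ℕ, 1 ≤ n →
      (c₁ - c₂) + 2 * (n : ℝ) * π * (b₁ - b₂) = f n := by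
    intro n hn
    have h := heq n hn
    have hε0 : 0 < 1 + ε n := by linarith [hε' n hn]
    have hδ0 : 0 < 1 + δ n := by linarith [hδ' n hn]
    have h' : Real.exp c₁ * Real.exp (2 * (n : ℝ) * π * b₁) * (1 + ε n)
        = Real.exp c₂ * Real.exp (2 * (n : ℝ) * π * b₂) * (1 + δ n) := by
      linarith
    have hl := congrArg Real.log h'
    rw [Real.log_mul (by positivity) (ne_of_gt hε0),
        Real.log_mul (Real.exp_ne_zero _) (Real.exp_ne_zero _),
        Real.log_mul (by positivity) (ne_of_gt hδ0),
        Real.log_mul (Real.exp_ne_zero _) (Real.exp_ne_zero _),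
        Real.log_exp, Real.log_exp, Real.log_exp, Real.log_exp] at hl
    simp only [hf]
    linarith
  -- f tends to 0
  have hftend : Tendsto f atTop (nhds 0) := by
    have h1 : Tendsto (fun n => Real.log (1 + ε n)) atTop (nhds 0) := by
      have : Tendsto (fun n => 1 + ε n) atTop (nhds 1) := by
        simpa using tendsto_const_nhds.add hε
      have := (Real.continuousAt_log (by norm_num : (1:ℝ) ≠ 0)).tendsto.comp this
      simpa [Function.comp_def] using this
    have h2 : Tendsto (fun n => Real.log (1 + δ n)) atTop (nhds 0) := by
      have : Tendsto (fun n => 1 + δ n) atTop (nhds 1) := by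
        simpa using tendsto_const_nhds.add hδ
      have := (Real.continuousAt_log (by norm_num : (1:ℝ) ≠ 0)).tendsto.comp this
      simpa [Function.comp_def] using this
    simpa using h2.sub h1
  -- difference trick: 2π(b₁-b₂) = f(n+1) - f n eventually
  have hdiff : Tendsto (fun n => f (n + 1) - f n) atTop (nhds 0) := by
    simpa using (hftend.comp (tendsto_add_atTop_nat 1)).sub hftend
  have hconst : ∀ n : ℕ, 1 ≤ n → f (n + 1) - f n = 2 * π * (b₁ - b₂) := by
    intro n hn
    have h1 := key n hn
    have h2 := key (n + 1) (by omega)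
    push_cast at h2
    linarith
  have hb : b₁ = b₂ := by
    have ht : Tendsto (fun _ : ℕ => 2 * π * (b₁ - b₂)) atTop (nhds 0) := by
      refine hdiff.congr' ?_
      filter_upwards [eventually_ge_atTop 1] with n hn
      exact hconst n hn
    have := tendsto_nhds_unique ht tendsto_const_nhds
    have hπ := Real.pi_pos
    nlinarith
  have hc : c₁ = c₂ := by
    have ht : Tendsto (fun _ : ℕ => c₁ - c₂) atTop (nhds 0) := by
      refine hftend.congr' ?_
      filter_upwards [eventually_ge_atTop 1] with n hn
      rw [← key n hn, hb]
      ring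
    have := tendsto_nhds_unique ht tendsto_const_nhds
    linarith
  refine ⟨hb, ?_⟩
  have : Real.arctan β₁ = Real.arctan β₂ := by
    rw [hc₁, hc₂, hb] at hc
    have hc' : (-2 * b₂) * (θ₀ + Real.arctan β₁) = (-2 * b₂) * (θ₀ + Real.arctan β₂) := by
      linarith
    have h2 := mul_left_cancel₀ (show (-2 * b₂ : ℝ) ≠ 0 by positivity) hc'
    linarith
  exact Real.arctan_injective this
end

section
/- Let b > 0, β ∈ ℝ, and define u₀(r) = sin(log(r)/b) and v₀(r) = cos(log(r)/b) for r > 0. Let u₁, u₂ : (0,1) → ℂ be differentiable and suppose that for j = 1, 2: (i) [u_j, u₀ + β·v₀](r) → 0 as r → 0⁺, and (ii) there is M > 0 with |[u_j, v₀](r)| ≤ M for all r ∈ (0, 1/2). Then [u₁, u₂](r) → 0 as r → 0⁺. -/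
open Real Filter Topology

/-- The Lagrange bracket `[f,g](r) = f(r)·r·g'(r) − r·f'(r)·g(r)` for complex-valued
functions of a real variable on a subinterval of `(0,∞)`. -/
noncomputable def lagrangeBracketC (f g : ℝ → ℂ) (r : ℝ) : ℂ :=
  f r * ((r : ℂ) * deriv g r) - (r : ℂ) * deriv f r * g r

private lemma plucker_alg (b β a1 a1' a2 a2' s c : ℂ) (hb : b ≠ 0)
    (h : s ^ 2 + c ^ 2 = 1) :
    a1 * a2' - a1' * a2 =
      -b * ((a1 * ((c - β * s) / b) - a1' * (s + β * c)) * (a2 * (-(s / b)) - a2' * c)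
        - (a1 * (-(s / b)) - a1' * c) * (a2 * ((c - β * s) / b) - a2' * (s + β * c))) := by
  field_simp
  linear_combination (a1' * a2 - a1 * a2') * b * h

private lemma deriv_w (b β : ℝ) {r : ℝ} (hr : 0 < r) :
    deriv (fun t => ((Real.sin (Real.log t / b) + β * Real.cos (Real.log t / b) : ℝ) : ℂ)) r
      = (((Real.cos (Real.log r / b) - β * Real.sin (Real.log r / b)) * (r⁻¹ / b) : ℝ) : ℂ) := by
  have hlog : HasDerivAt (fun t : ℝ => Real.log t / b) (r⁻¹ / b) r :=
    (Real.hasDerivAt_log hr.ne').div_const b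
  have hs : HasDerivAt (fun t : ℝ => Real.sin (Real.log t / b))
      (Real.cos (Real.log r / b) * (r⁻¹ / b)) r :=
    (Real.hasDerivAt_sin _).comp r hlog
  have hc : HasDerivAt (fun t : ℝ => Real.cos (Real.log t / b))
      (-Real.sin (Real.log r / b) * (r⁻¹ / b)) r :=
    (Real.hasDerivAt_cos _).comp r hlog
  have := ((hs.add (hc.const_mul β)).ofReal_comp).deriv
  simp only [Pi.add_apply] at this
  rw [this]
  push_cast
  ring

private lemma deriv_v (b : ℝ) {r : ℝ} (hr : 0 < r) :
    deriv (fun t => ((Real.cos (Real.log t / b) : ℝ) : ℂ)) r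
      = ((-Real.sin (Real.log r / b) * (r⁻¹ / b) : ℝ) : ℂ) := by
  have hlog : HasDerivAt (fun t : ℝ => Real.log t / b) (r⁻¹ / b) r :=
    (Real.hasDerivAt_log hr.ne').div_const b
  have hc : HasDerivAt (fun t : ℝ => Real.cos (Real.log t / b))
      (-Real.sin (Real.log r / b) * (r⁻¹ / b)) r :=
    (Real.hasDerivAt_cos _).comp r hlog
  exact hc.ofReal_comp.deriv

theorem bracket_vanishes_for_common_selfadjoint_bc (b β : ℝ) (hb : 0 < b)
    (u₁ u₂ : ℝ → ℂ)
    (hu₁ : ∀ r ∈ Set.Ioo (0 : ℝ) 1, DifferentiableAt ℝ u₁ r)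
    (hu₂ : ∀ r ∈ Set.Ioo (0 : ℝ) 1, DifferentiableAt ℝ u₂ r)
    (hbc₁ : Tendsto
      (fun r => lagrangeBracketC u₁
        (fun t => ((Real.sin (Real.log t / b) + β * Real.cos (Real.log t / b) : ℝ) : ℂ)) r)
      (nhdsWithin 0 (Set.Ioi 0)) (nhds 0))
    (hbc₂ : Tendsto
      (fun r => lagrangeBracketC u₂
        (fun t => ((Real.sin (Real.log t / b) + β * Real.cos (Real.log t / b) : ℝ) : ℂ)) r)
      (nhdsWithin 0 (Set.Ioi 0)) (nhds 0))
    (M : ℝ) (hM : 0 < M)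
    (hbd₁ : ∀ r ∈ Set.Ioo (0 : ℝ) (1 / 2),
      ‖lagrangeBracketC u₁ (fun t => (Real.cos (Real.log t / b) : ℂ)) r‖ ≤ M)
    (hbd₂ : ∀ r ∈ Set.Ioo (0 : ℝ) (1 / 2),
      ‖lagrangeBracketC u₂ (fun t => (Real.cos (Real.log t / b) : ℂ)) r‖ ≤ M) :
    Tendsto (fun r => lagrangeBracketC u₁ u₂ r) (nhdsWithin 0 (Set.Ioi 0)) (nhds 0) := by
  set w : ℝ → ℂ :=
    fun t => ((Real.sin (Real.log t / b) + β * Real.cos (Real.log t / b) : ℝ) : ℂ) with hw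
  set v : ℝ → ℂ := fun t => ((Real.cos (Real.log t / b) : ℝ) : ℂ) with hv
  have hmem : Set.Ioo (0 : ℝ) (1 / 2) ∈ nhdsWithin (0 : ℝ) (Set.Ioi 0) := by
    rw [mem_nhdsWithin]
    exact ⟨Set.Iio (1 / 2), isOpen_Iio, by norm_num, fun x hx => ⟨hx.2, hx.1⟩⟩
  have h1 : Tendsto (fun r => lagrangeBracketC u₁ w r * lagrangeBracketC u₂ v r)
      (nhdsWithin 0 (Set.Ioi 0)) (nhds 0) := by
    refine squeeze_zero_norm' ?_ (f := fun r => lagrangeBracketC u₁ w r * lagrangeBracketC u₂ v r)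
      (a := fun r => M * ‖lagrangeBracketC u₁ w r‖) (by simpa using hbc₁.norm.const_mul M)
    filter_upwards [hmem] with r hr
    rw [norm_mul, mul_comm]
    exact mul_le_mul_of_nonneg_right (hbd₂ r hr) (norm_nonneg _)
  have h2 : Tendsto (fun r => lagrangeBracketC u₁ v r * lagrangeBracketC u₂ w r)
      (nhdsWithin 0 (Set.Ioi 0)) (nhds 0) := by
    refine squeeze_zero_norm' ?_ (f := fun r => lagrangeBracketC u₁ v r * lagrangeBracketC u₂ w r)
      (a := fun r => M * ‖lagrangeBracketC u₂ w r‖) (by simpa using hbc₂.norm.const_mul M)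
    filter_upwards [hmem] with r hr
    rw [norm_mul]
    exact mul_le_mul_of_nonneg_right (hbd₁ r hr) (norm_nonneg _)
  have hlim : Tendsto (fun r => (-(b : ℂ)) *
      (lagrangeBracketC u₁ w r * lagrangeBracketC u₂ v r
        - lagrangeBracketC u₁ v r * lagrangeBracketC u₂ w r))
      (nhdsWithin 0 (Set.Ioi 0)) (nhds 0) := by
    simpa using ((h1.sub h2).const_mul (-(b : ℂ)))
  refine hlim.congr' ?_
  have hmem' : Set.Ioo (0 : ℝ) 1 ∈ nhdsWithin (0 : ℝ) (Set.Ioi 0) := by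
    rw [mem_nhdsWithin]
    exact ⟨Set.Iio 1, isOpen_Iio, by norm_num, fun x hx => ⟨hx.2, hx.1⟩⟩
  filter_upwards [hmem'] with r hr
  have hr0 : (0 : ℝ) < r := hr.1
  have hbC : (b : ℂ) ≠ 0 := by exact_mod_cast hb.ne'
  have hrC : (r : ℂ) ≠ 0 := by exact_mod_cast hr0.ne'
  have key := plucker_alg (b : ℂ) (β : ℂ) (u₁ r) ((r : ℂ) * deriv u₁ r)
    (u₂ r) ((r : ℂ) * deriv u₂ r) ((Real.sin (Real.log r / b) : ℝ) : ℂ)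
    ((Real.cos (Real.log r / b) : ℝ) : ℂ) hbC
    (by exact_mod_cast Real.sin_sq_add_cos_sq (Real.log r / b))
  have hdw : (r : ℂ) * deriv w r
      = (((Real.cos (Real.log r / b) : ℝ) : ℂ)
          - (β : ℂ) * ((Real.sin (Real.log r / b) : ℝ) : ℂ)) / b := by
    rw [hw, deriv_w b β hr0]
    push_cast
    field_simp
  have hdv : (r : ℂ) * deriv v r = -(((Real.sin (Real.log r / b) : ℝ) : ℂ) / b) := by
    rw [hv, deriv_v b hr0]
    push_cast
    field_simp
  have hwr : w r = ((Real.sin (Real.log r / b) : ℝ) : ℂ)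
      + (β : ℂ) * ((Real.cos (Real.log r / b) : ℝ) : ℂ) := by
    rw [hw]; push_cast; ring
  have hvr : v r = ((Real.cos (Real.log r / b) : ℝ) : ℂ) := rfl
  simp only [lagrangeBracketC, hdw, hdv, hwr, hvr] at key ⊢
  exact key.symm
end

section
/- Let b > 0 and μ ∈ ℝ. There exists a twice continuously differentiable function Θ : ℝ → ℝ, not identically zero on [-π/2, π/2], satisfying Θ''(θ) = -μ·Θ(θ) for all θ ∈ ℝ together with b·Θ'(π/2) + Θ(π/2) = 0 and b·Θ'(-π/2) + Θ(-π/2) = 0, if and only if μ = -1/b² or μ = n² for some integer n ≥ 1. -/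
open Real


private lemma wronskian_const {μ : ℝ} {g g1 c c1 : ℝ → ℝ}
    (hg : ∀ θ, HasDerivAt g (g1 θ) θ) (hg1 : ∀ θ, HasDerivAt g1 (-μ * g θ) θ)
    (hc : ∀ θ, HasDerivAt c (c1 θ) θ) (hc1 : ∀ θ, HasDerivAt c1 (-μ * c θ) θ)
    (θ : ℝ) : g θ * c1 θ - g1 θ * c θ = g 0 * c1 0 - g1 0 * c 0 := by
  have hd : ∀ x, HasDerivAt (fun y => g y * c1 y - g1 y * c y) 0 x := by
    intro x
    have h := ((hg x).mul (hc1 x)).sub ((hg1 x).mul (hc x))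
    refine h.congr_deriv ?_
    ring
  exact is_const_of_deriv_eq_zero (fun x => (hd x).differentiableAt)
    (fun x => (hd x).deriv) θ 0

private lemma ode_rep {μ W : ℝ} {Θ c c1 s s1 : ℝ → ℝ} (hΘ : ContDiff ℝ 2 Θ)
    (hode : ∀ θ, deriv (deriv Θ) θ = -μ * Θ θ)
    (hc : ∀ θ, HasDerivAt c (c1 θ) θ) (hc1 : ∀ θ, HasDerivAt c1 (-μ * c θ) θ)
    (hs : ∀ θ, HasDerivAt s (s1 θ) θ) (hs1 : ∀ θ, HasDerivAt s1 (-μ * s θ) θ)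
    (hw : ∀ θ, c θ * s1 θ - c1 θ * s θ = W) (hW : W ≠ 0) :
    ∃ A B : ℝ, (∀ θ, Θ θ = A * c θ + B * s θ) ∧
      ∀ θ, deriv Θ θ = A * c1 θ + B * s1 θ := by
  have hΘd : Differentiable ℝ Θ := hΘ.differentiable (by norm_num)
  have hΘ1 : ContDiff ℝ 1 (deriv Θ) := by
    have h2 : (2 : WithTop ℕ∞) = 1 + 1 := by norm_num
    rw [h2] at hΘ
    exact (contDiff_succ_iff_deriv.mp hΘ).2.2
  have hΘ'd : Differentiable ℝ (deriv Θ) := hΘ1.differentiable one_ne_zero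
  obtain ⟨α, hα⟩ : ∃ x : ℝ, x = Θ 0 * s1 0 - deriv Θ 0 * s 0 := ⟨_, rfl⟩
  obtain ⟨β, hβ⟩ : ∃ x : ℝ, x = deriv Θ 0 * c 0 - Θ 0 * c1 0 := ⟨_, rfl⟩
  have hg : ∀ θ, HasDerivAt (fun y => W * Θ y - α * c y - β * s y)
      (W * deriv Θ θ - α * c1 θ - β * s1 θ) θ := by
    intro θ
    exact (((hΘd θ).hasDerivAt.const_mul W).sub ((hc θ).const_mul α)).sub
      ((hs θ).const_mul β)
  have hg1 : ∀ θ, HasDerivAt (fun y => W * deriv Θ y - α * c1 y - β * s1 y)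
      (-μ * (W * Θ θ - α * c θ - β * s θ)) θ := by
    intro θ
    have h1 : HasDerivAt (deriv Θ) (-μ * Θ θ) θ := by
      have := (hΘ'd θ).hasDerivAt
      rwa [hode θ] at this
    have h := ((h1.const_mul W).sub ((hc1 θ).const_mul α)).sub ((hs1 θ).const_mul β)
    refine h.congr_deriv ?_
    ring
  have h0 : W * Θ 0 - α * c 0 - β * s 0 = 0 := by
    rw [hα, hβ]; linear_combination (-(Θ 0)) * hw 0
  have h0' : W * deriv Θ 0 - α * c1 0 - β * s1 0 = 0 := by
    rw [hα, hβ]; linear_combination (-(deriv Θ 0)) * hw 0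
  have hzero : ∀ θ, W * Θ θ - α * c θ - β * s θ = 0 ∧
      W * deriv Θ θ - α * c1 θ - β * s1 θ = 0 := by
    intro θ
    have h1 := wronskian_const hg hg1 hc hc1 θ
    have h2 := wronskian_const hg hg1 hs hs1 θ
    have e1 : (W * Θ θ - α * c θ - β * s θ) * c1 θ
        = (W * deriv Θ θ - α * c1 θ - β * s1 θ) * c θ := by
      linear_combination h1 + c1 0 * h0 - c 0 * h0'
    have e2 : (W * Θ θ - α * c θ - β * s θ) * s1 θ
        = (W * deriv Θ θ - α * c1 θ - β * s1 θ) * s θ := by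
      linear_combination h2 + s1 0 * h0 - s 0 * h0'
    constructor
    · have hgW : (W * Θ θ - α * c θ - β * s θ) * W = 0 := by
        linear_combination c θ * e2 - s θ * e1
          - (W * Θ θ - α * c θ - β * s θ) * hw θ
      exact (mul_eq_zero.mp hgW).resolve_right hW
    · have hgW : (W * deriv Θ θ - α * c1 θ - β * s1 θ) * W = 0 := by
        linear_combination c1 θ * e2 - s1 θ * e1
          - (W * deriv Θ θ - α * c1 θ - β * s1 θ) * hw θ
      exact (mul_eq_zero.mp hgW).resolve_right hW
  refine ⟨α / W, β / W, fun θ => ?_, fun θ => ?_⟩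
  · have h := (hzero θ).1
    field_simp
    linarith [h]
  · have h := (hzero θ).2
    field_simp
    linarith [h]


theorem angular_eigenvalue_characterization (b : ℝ) (hb : 0 < b) (μ : ℝ) :
    (∃ Θ : ℝ → ℝ, ContDiff ℝ 2 Θ
        ∧ ¬(∀ θ ∈ Set.Icc (-(π / 2)) (π / 2), Θ θ = 0)
        ∧ (∀ θ : ℝ, deriv (deriv Θ) θ = -μ * Θ θ)
        ∧ b * deriv Θ (π / 2) + Θ (π / 2) = 0
        ∧ b * deriv Θ (-(π / 2)) + Θ (-(π / 2)) = 0)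
    ↔ μ = -1 / b ^ 2 ∨ ∃ n : ℕ, 1 ≤ n ∧ μ = (n : ℝ) ^ 2 := by
  have hπ := Real.pi_pos
  constructor
  · rintro ⟨Θ, hC, hne, hode, hbc1, hbc2⟩
    rcases lt_trichotomy μ 0 with hμ | hμ | hμ
    · -- μ < 0
      set ω := Real.sqrt (-μ) with hωdef
      have hω : 0 < ω := Real.sqrt_pos.mpr (by linarith)
      have hω2 : ω ^ 2 = -μ := Real.sq_sqrt (by linarith)
      have hinner : ∀ θ : ℝ, HasDerivAt (fun y : ℝ => ω * y) ω θ := by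
        intro θ; simpa using (hasDerivAt_id θ).const_mul ω
      have hc : ∀ θ : ℝ, HasDerivAt (fun y => Real.cosh (ω * y)) (ω * Real.sinh (ω * θ)) θ := by
        intro θ; have := (hinner θ).cosh; convert this using 1; ring
      have hc1 : ∀ θ : ℝ, HasDerivAt (fun y => ω * Real.sinh (ω * y))
          (-μ * Real.cosh (ω * θ)) θ := by
        intro θ; have := ((hinner θ).sinh).const_mul ω
        refine this.congr_deriv ?_; rw [← hω2]; ring
      have hs : ∀ θ : ℝ, HasDerivAt (fun y => Real.sinh (ω * y)) (ω * Real.cosh (ω * θ)) θ := by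
        intro θ; have := (hinner θ).sinh; convert this using 1; ring
      have hs1 : ∀ θ : ℝ, HasDerivAt (fun y => ω * Real.cosh (ω * y))
          (-μ * Real.sinh (ω * θ)) θ := by
        intro θ; have := ((hinner θ).cosh).const_mul ω
        refine this.congr_deriv ?_; rw [← hω2]; ring
      have hw : ∀ θ : ℝ, Real.cosh (ω * θ) * (ω * Real.cosh (ω * θ))
          - ω * Real.sinh (ω * θ) * Real.sinh (ω * θ) = ω := by
        intro θ
        have := Real.cosh_sq_sub_sinh_sq (ω * θ)
        linear_combination ω * this
      obtain ⟨A, B, hrep, hrep'⟩ := ode_rep hC hode hc hc1 hs hs1 hw hω.ne'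
      have hAB : ¬(A = 0 ∧ B = 0) := by
        rintro ⟨rfl, rfl⟩
        exact hne fun θ _ => by rw [hrep θ]; ring
      rw [hrep (π / 2), hrep' (π / 2)] at hbc1
      rw [hrep (-(π / 2)), hrep' (-(π / 2))] at hbc2
      have hx : ω * -(π / 2) = -(ω * (π / 2)) := by ring
      rw [hx, Real.sinh_neg, Real.cosh_neg] at hbc2
      have hch : (0:ℝ) < Real.cosh (ω * (π / 2)) := Real.cosh_pos _
      have hsh : (0:ℝ) < Real.sinh (ω * (π / 2)) := by
        rw [Real.sinh_pos_iff]; positivity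
      have hsum : Real.cosh (ω * (π / 2)) * (b * ω * B + A) = 0 := by
        linear_combination (hbc1 + hbc2) / 2
      have hdiff : Real.sinh (ω * (π / 2)) * (b * ω * A + B) = 0 := by
        linear_combination (hbc1 - hbc2) / 2
      have hA : b * ω * B + A = 0 := by
        rcases mul_eq_zero.mp hsum with h | h
        · exact absurd h hch.ne'
        · exact h
      have hBeq : b * ω * A + B = 0 := by
        rcases mul_eq_zero.mp hdiff with h | h
        · exact absurd h hsh.ne'
        · exact h
      have hq : (1 - (b * ω) ^ 2) * A = 0 := by
        linear_combination hA - (b * ω) * hBeq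
      have hA0 : A ≠ 0 := by
        intro h
        apply hAB
        refine ⟨h, ?_⟩
        rw [h] at hBeq; linarith
      have hbω : b * ω = 1 := by
        have h1 : (1 - (b * ω) ^ 2) = 0 := by
          rcases mul_eq_zero.mp hq with h | h
          · exact h
          · exact absurd h hA0
        have h2 : (b * ω - 1) * (b * ω + 1) = 0 := by linear_combination -h1
        rcases mul_eq_zero.mp h2 with h | h
        · linarith
        · nlinarith [mul_pos hb hω]
      left
      have hμeq : μ = -(ω ^ 2) := by linarith
      have hω1 : ω = 1 / b := by
        field_simp
        linarith [hbω]
      rw [hμeq, hω1]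
      ring
    · -- μ = 0
      subst hμ
      have hc : ∀ θ : ℝ, HasDerivAt (fun _ : ℝ => (1:ℝ)) ((fun _ : ℝ => (0:ℝ)) θ) θ :=
        fun θ => hasDerivAt_const θ 1
      have hc1 : ∀ θ : ℝ, HasDerivAt (fun _ : ℝ => (0:ℝ)) (-(0:ℝ) * (1:ℝ)) θ := by
        intro θ; simpa using hasDerivAt_const θ (0:ℝ)
      have hs : ∀ θ : ℝ, HasDerivAt (fun y : ℝ => y) (1:ℝ) θ := fun θ => hasDerivAt_id θ
      have hs1 : ∀ θ : ℝ, HasDerivAt (fun _ : ℝ => (1:ℝ)) (-(0:ℝ) * θ) θ := by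
        intro θ; simpa using hasDerivAt_const θ (1:ℝ)
      have hw : ∀ θ : ℝ, (1:ℝ) * 1 - 0 * θ = 1 := fun θ => by ring
      obtain ⟨A, B, hrep, hrep'⟩ := ode_rep hC hode hc hc1 hs hs1 hw one_ne_zero
      have hAB : ¬(A = 0 ∧ B = 0) := by
        rintro ⟨rfl, rfl⟩
        exact hne fun θ _ => by rw [hrep θ]; ring
      rw [hrep (π / 2), hrep' (π / 2)] at hbc1
      rw [hrep (-(π / 2)), hrep' (-(π / 2))] at hbc2
      have hB : B = 0 := by
        have : B * π = 0 := by linear_combination hbc1 - hbc2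
        rcases mul_eq_zero.mp this with h | h
        · exact h
        · exact absurd h Real.pi_ne_zero
      have hA : A = 0 := by rw [hB] at hbc1; linarith
      exact absurd ⟨hA, hB⟩ hAB
    · -- μ > 0
      set ω := Real.sqrt μ with hωdef
      have hω : 0 < ω := Real.sqrt_pos.mpr hμ
      have hω2 : ω ^ 2 = μ := Real.sq_sqrt hμ.le
      have hinner : ∀ θ : ℝ, HasDerivAt (fun y : ℝ => ω * y) ω θ := by
        intro θ; simpa using (hasDerivAt_id θ).const_mul ω
      have hc : ∀ θ : ℝ, HasDerivAt (fun y => Real.cos (ω * y)) (-(ω * Real.sin (ω * θ))) θ := by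
        intro θ; have := (hinner θ).cos; convert this using 1; ring
      have hc1 : ∀ θ : ℝ, HasDerivAt (fun y => -(ω * Real.sin (ω * y)))
          (-μ * Real.cos (ω * θ)) θ := by
        intro θ; have := (((hinner θ).sin).const_mul ω).neg
        refine this.congr_deriv ?_; rw [← hω2]; ring
      have hs : ∀ θ : ℝ, HasDerivAt (fun y => Real.sin (ω * y)) (ω * Real.cos (ω * θ)) θ := by
        intro θ; have := (hinner θ).sin; convert this using 1; ring
      have hs1 : ∀ θ : ℝ, HasDerivAt (fun y => ω * Real.cos (ω * y))
          (-μ * Real.sin (ω * θ)) θ := by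
        intro θ; have := ((hinner θ).cos).const_mul ω
        refine this.congr_deriv ?_; rw [← hω2]; ring
      have hw : ∀ θ : ℝ, Real.cos (ω * θ) * (ω * Real.cos (ω * θ))
          - -(ω * Real.sin (ω * θ)) * Real.sin (ω * θ) = ω := by
        intro θ
        have := Real.sin_sq_add_cos_sq (ω * θ)
        linear_combination ω * this
      obtain ⟨A, B, hrep, hrep'⟩ := ode_rep hC hode hc hc1 hs hs1 hw hω.ne'
      have hAB : ¬(A = 0 ∧ B = 0) := by
        rintro ⟨rfl, rfl⟩
        exact hne fun θ _ => by rw [hrep θ]; ring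
      rw [hrep (π / 2), hrep' (π / 2)] at hbc1
      rw [hrep (-(π / 2)), hrep' (-(π / 2))] at hbc2
      have hx : ω * -(π / 2) = -(ω * (π / 2)) := by ring
      rw [hx, Real.sin_neg, Real.cos_neg] at hbc2
      have hsum : Real.cos (ω * (π / 2)) * (b * ω * B + A) = 0 := by
        linear_combination (hbc1 + hbc2) / 2
      have hdiff : Real.sin (ω * (π / 2)) * (b * ω * A - B) = 0 := by
        linear_combination (hbc2 - hbc1) / 2
      have hcs : Real.cos (ω * (π / 2)) = 0 ∨ Real.sin (ω * (π / 2)) = 0 := by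
        by_contra h
        push_neg at h
        have hA : b * ω * B + A = 0 := (mul_eq_zero.mp hsum).resolve_left h.1
        have hBeq : b * ω * A - B = 0 := (mul_eq_zero.mp hdiff).resolve_left h.2
        have hq : (1 + (b * ω) ^ 2) * B = 0 := by
          linear_combination (b * ω) * hA - hBeq
        have hB : B = 0 := by
          rcases mul_eq_zero.mp hq with h' | h'
          · nlinarith
          · exact h'
        have hA0 : A = 0 := by rw [hB] at hA; linarith
        exact hAB ⟨hA0, hB⟩
      right
      rcases hcs with h | h
      · rw [Real.cos_eq_zero_iff] at h
        obtain ⟨k, hk⟩ := h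
        have hωk : ω = 2 * (k : ℝ) + 1 := by
          have h2 : (π / 2 : ℝ) ≠ 0 := by positivity
          apply mul_right_cancel₀ h2
          rw [hk]; ring
        have hk0 : 0 ≤ k := by
          have h1 : (0:ℝ) < 2 * (k : ℝ) + 1 := hωk ▸ hω
          have h2 : (0:ℤ) < 2 * k + 1 := by exact_mod_cast h1
          omega
        have hcast : ((k.toNat : ℕ) : ℝ) = (k : ℝ) := by
          rw [← Int.cast_natCast, Int.toNat_of_nonneg hk0]
        refine ⟨2 * k.toNat + 1, by omega, ?_⟩
        rw [← hω2, hωk]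
        push_cast
        rw [hcast]
      · rw [Real.sin_eq_zero_iff] at h
        obtain ⟨k, hk⟩ := h
        have hωk : ω = 2 * (k : ℝ) := by
          have h2 : (π / 2 : ℝ) ≠ 0 := by positivity
          apply mul_right_cancel₀ h2
          rw [← hk]; ring
        have hk0 : 0 < k := by
          have h1 : (0:ℝ) < 2 * (k : ℝ) := hωk ▸ hω
          have h2 : (0:ℤ) < 2 * k := by exact_mod_cast h1
          omega
        have hcast : ((k.toNat : ℕ) : ℝ) = (k : ℝ) := by
          rw [← Int.cast_natCast, Int.toNat_of_nonneg hk0.le]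
        refine ⟨2 * k.toNat, by omega, ?_⟩
        rw [← hω2, hωk]
        push_cast
        rw [hcast]
  · rintro (hμ | ⟨n, hn, hμ⟩)
    · -- Θ = exp (-(θ/b))
      refine ⟨fun θ => Real.exp (-(θ / b)), ?_, ?_, ?_, ?_, ?_⟩
      · exact Real.contDiff_exp.comp ((contDiff_id.div_const b).neg)
      · intro h
        have h0 := h 0 ⟨by linarith, by linarith⟩
        simp at h0
      all_goals {
        have hinner : ∀ θ : ℝ, HasDerivAt (fun y : ℝ => -(y / b)) (-(1 / b)) θ := by
          intro θ; exact ((hasDerivAt_id θ).div_const b).neg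
        have hd : ∀ θ : ℝ, HasDerivAt (fun y => Real.exp (-(y / b)))
            (-(1 / b) * Real.exp (-(θ / b))) θ := by
          intro θ; have := (hinner θ).exp; convert this using 1; ring
        have hderiv : deriv (fun y => Real.exp (-(y / b))) = fun θ =>
            -(1 / b) * Real.exp (-(θ / b)) := funext fun θ => (hd θ).deriv
        first
        | · intro θ
            rw [hderiv]
            have hd2 : HasDerivAt (fun y => -(1 / b) * Real.exp (-(y / b)))
                (-μ * Real.exp (-(θ / b))) θ := by
              have := ((hinner θ).exp).const_mul (-(1 / b))
              refine this.congr_deriv ?_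
              rw [hμ]
              field_simp
            exact hd2.deriv
        | · rw [hderiv]
            field_simp
            ring
      }
    · -- Θ = sin (n (θ - π/2)) - b n cos (n (θ - π/2))
      have hn' : (0:ℝ) < (n:ℝ) := by exact_mod_cast hn
      refine ⟨fun θ => Real.sin ((n:ℝ) * (θ - π / 2)) - b * n * Real.cos ((n:ℝ) * (θ - π / 2)),
        ?_, ?_, ?_, ?_, ?_⟩
      · have hlin : ContDiff ℝ 2 (fun θ : ℝ => (n:ℝ) * (θ - π / 2)) :=
          contDiff_const.mul (contDiff_id.sub contDiff_const)
        exact (Real.contDiff_sin.comp hlin).sub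
          (contDiff_const.mul (Real.contDiff_cos.comp hlin))
      · intro h
        have h0 := h (π / 2) ⟨by linarith, le_refl _⟩
        simp at h0
        rcases h0 with h' | h'
        · exact hb.ne' h'
        · omega
      all_goals {
        have hinner : ∀ θ : ℝ, HasDerivAt (fun y : ℝ => (n:ℝ) * (y - π / 2)) (n:ℝ) θ := by
          intro θ; simpa using ((hasDerivAt_id θ).sub_const (π / 2)).const_mul (n:ℝ)
        have hd : ∀ θ : ℝ, HasDerivAt
            (fun y => Real.sin ((n:ℝ) * (y - π / 2)) - b * n * Real.cos ((n:ℝ) * (y - π / 2)))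
            ((n:ℝ) * Real.cos ((n:ℝ) * (θ - π / 2))
              + b * (n:ℝ)^2 * Real.sin ((n:ℝ) * (θ - π / 2))) θ := by
          intro θ
          have := ((hinner θ).sin).sub (((hinner θ).cos).const_mul (b * n))
          refine this.congr_deriv ?_; ring
        have hderiv : deriv
            (fun y => Real.sin ((n:ℝ) * (y - π / 2)) - b * n * Real.cos ((n:ℝ) * (y - π / 2)))
            = fun θ => (n:ℝ) * Real.cos ((n:ℝ) * (θ - π / 2))
              + b * (n:ℝ)^2 * Real.sin ((n:ℝ) * (θ - π / 2)) :=
          funext fun θ => (hd θ).deriv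
        first
        | · intro θ
            rw [hderiv]
            have hd2 : HasDerivAt (fun y => (n:ℝ) * Real.cos ((n:ℝ) * (y - π / 2))
                + b * (n:ℝ)^2 * Real.sin ((n:ℝ) * (y - π / 2)))
                (-μ * (Real.sin ((n:ℝ) * (θ - π / 2))
                  - b * n * Real.cos ((n:ℝ) * (θ - π / 2)))) θ := by
              have := (((hinner θ).cos).const_mul (n:ℝ)).add
                (((hinner θ).sin).const_mul (b * (n:ℝ)^2))
              refine this.congr_deriv ?_
              rw [hμ]
              ring
            exact hd2.deriv
        | · rw [hderiv]
            have h0 : (n:ℝ) * (π / 2 - π / 2) = 0 := by ring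
            simp only [h0, Real.sin_zero, Real.cos_zero]
            ring
        | · rw [hderiv]
            have h0 : (n:ℝ) * (-(π / 2) - π / 2) = -((n:ℝ) * π) := by ring
            simp only [h0, Real.sin_neg, Real.sin_nat_mul_pi, neg_zero]
            ring
      }
end
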